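/- For all integers 1 ≤ k ≤ N, there exists a sequence v_1, v_2, …, v_M with M = C(N,k) that lists every k-of-N code exactly once, such that v_1 <_GC v_2 <_GC ⋯ <_GC v_M (the sequence is strictly increasing in Gray-code order) and the Hamming distance h(v_t, v_{t+1}) equals 2 for every 1 ≤ t < M. -/

import Mathlib

/-- Gray-code order on bit vectors of length `L` (as functions `Fin L → Bool`). -/
def grayLT {L : ℕ} (a b : Fin L → Bool) : Prop :=
  ∃ j : Fin L, (∀ i, i < j → a i = b i) ∧ a j ≠ b j ∧
    (a j = true ↔ Odd ((Finset.Iio j).filter (fun i => a i = true)).card)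

/-- A `k`-of-`N` code: a bit vector of length `N` with exactly `k` ones. -/
def isKofN (N k : ℕ) (x : Fin N → Bool) : Prop :=
  ((Finset.univ : Finset (Fin N)).filter (fun i => x i = true)).card = k


def wt {n : ℕ} (x : Fin n → Bool) : ℕ := (Finset.univ.filter (fun i => x i = true)).card

lemma wt_cons {n : ℕ} (c : Bool) (x : Fin n → Bool) :
    wt (Fin.cons c x : Fin (n+1) → Bool) = (if c = true then 1 else 0) + wt x := by
  simp only [wt, Finset.card_filter, Fin.sum_univ_succ, Fin.cons_zero, Fin.cons_succ]

lemma hamming_eq {n : ℕ} (x y : Fin n → Bool) :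
    hammingDist x y = (Finset.univ.filter (fun i => ¬ x i = y i)).card := rfl

lemma hamming_cons {n : ℕ} (a b : Bool) (x y : Fin n → Bool) :
    hammingDist (Fin.cons a x : Fin (n+1) → Bool) (Fin.cons b y : Fin (n+1) → Bool) = (if a = b then 0 else 1) + hammingDist x y := by
  rw [hamming_eq, hamming_eq, Finset.card_filter, Finset.card_filter, Fin.sum_univ_succ]
  simp only [Fin.cons_zero, Fin.cons_succ]
  congr 1
  by_cases h : a = b <;> simp [h]

lemma Iio_eq_filter {n : ℕ} (j : Fin n) : Finset.Iio j = Finset.univ.filter (fun i => i < j) := by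
  ext i; simp

lemma count_Iio_succ {n : ℕ} (j : Fin n) (p : Fin (n+1) → Bool) :
    ((Finset.Iio j.succ).filter (fun i => p i = true)).card
      = (if p 0 = true then 1 else 0) + ((Finset.Iio j).filter (fun i => p i.succ = true)).card := by
  rw [Iio_eq_filter, Iio_eq_filter, Finset.filter_filter, Finset.filter_filter,
    Finset.card_filter, Finset.card_filter, Fin.sum_univ_succ]
  congr 1
  · simp [Fin.succ_pos]
  · apply Finset.sum_congr rfl
    intro i _
    simp [Fin.succ_lt_succ_iff]


lemma grayLT_cons_ff {n : ℕ} (x y : Fin n → Bool) :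
    grayLT (Fin.cons false x : Fin (n+1) → Bool) (Fin.cons false y) ↔ grayLT x y := by
  constructor
  · rintro ⟨j, h1, h2, h3⟩
    rcases Fin.eq_zero_or_eq_succ j with rfl | ⟨j', rfl⟩
    · simp [Fin.cons_zero] at h2
    · refine ⟨j', fun i hi => ?_, ?_, ?_⟩
      · have := h1 i.succ (by simpa [Fin.succ_lt_succ_iff] using hi)
        simpa using this
      · simpa using h2
      · rw [count_Iio_succ] at h3
        simpa using h3
  · rintro ⟨j, h1, h2, h3⟩
    refine ⟨j.succ, fun i hi => ?_, by simpa using h2, ?_⟩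
    · rcases Fin.eq_zero_or_eq_succ i with rfl | ⟨i', rfl⟩
      · simp
      · simp only [Fin.cons_succ]
        exact h1 i' (by simpa [Fin.succ_lt_succ_iff] using hi)
    · rw [count_Iio_succ]
      simpa using h3

lemma grayLT_cons_ft {n : ℕ} (x y : Fin n → Bool) :
    grayLT (Fin.cons false x : Fin (n+1) → Bool) (Fin.cons true y) := by
  have h0 : Finset.Iio (0 : Fin (n+1)) = ∅ := by ext i; simp
  exact ⟨0, fun i hi => absurd hi (by simp), by simp, by simp [h0]⟩

lemma count_congr {n : ℕ} (x y : Fin n → Bool) (j : Fin n) (h : ∀ i, i < j → x i = y i) :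
    ((Finset.Iio j).filter (fun i => x i = true)).card
      = ((Finset.Iio j).filter (fun i => y i = true)).card := by
  congr 1
  apply Finset.filter_congr
  intro i hi
  simp only [Finset.mem_Iio] at hi
  simp [h i hi]

lemma odd_one_add (c : ℕ) : Odd (1 + c) ↔ ¬ Odd c := by
  rw [Nat.add_comm, Nat.odd_add_one]

lemma grayLT_cons_tt {n : ℕ} (x y : Fin n → Bool) :
    grayLT (Fin.cons true x : Fin (n+1) → Bool) (Fin.cons true y) ↔ grayLT y x := by
  constructor
  · rintro ⟨j, h1, h2, h3⟩
    rcases Fin.eq_zero_or_eq_succ j with rfl | ⟨j', rfl⟩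
    · simp [Fin.cons_zero] at h2
    · have h1' : ∀ i, i < j' → x i = y i := by
        intro i hi
        simpa using h1 i.succ (by simpa [Fin.succ_lt_succ_iff] using hi)
      have h2' : x j' ≠ y j' := by simpa using h2
      refine ⟨j', fun i hi => (h1' i hi).symm, Ne.symm h2', ?_⟩
      rw [count_Iio_succ] at h3
      simp only [Fin.cons_zero, Fin.cons_succ] at h3
      rw [if_pos trivial, odd_one_add] at h3
      rw [← count_congr x y j' h1']
      cases hx : x j' <;> cases hy : y j' <;> simp_all
  · rintro ⟨j, h1, h2, h3⟩
    have h1' : ∀ i, i < j → x i = y i := fun i hi => (h1 i hi).symm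
    refine ⟨j.succ, fun i hi => ?_, by simpa using (Ne.symm h2), ?_⟩
    · rcases Fin.eq_zero_or_eq_succ i with rfl | ⟨i', rfl⟩
      · simp
      · simp only [Fin.cons_succ]
        exact h1' i' (by simpa [Fin.succ_lt_succ_iff] using hi)
    · rw [count_Iio_succ]
      simp only [Fin.cons_zero, Fin.cons_succ]
      rw [if_pos trivial, odd_one_add, count_congr x y j h1']
      cases hx : x j <;> cases hy : y j <;> simp_all

def grayList : (n : ℕ) → List (Fin n → Bool)
  | 0 => [fun i => i.elim0]
  | n + 1 => ((grayList n).map (fun x => (Fin.cons false x : Fin (n+1) → Bool)))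
      ++ (((grayList n).reverse).map (fun x => (Fin.cons true x : Fin (n+1) → Bool)))

lemma mem_grayList : ∀ (n : ℕ) (x : Fin n → Bool), x ∈ grayList n
  | 0, x => by
    simp only [grayList, List.mem_singleton]
    funext i; exact i.elim0
  | n + 1, x => by
    have hx : x = Fin.cons (x 0) (Fin.tail x) := (Fin.cons_self_tail x).symm
    have hmem := mem_grayList n (Fin.tail x)
    rw [grayList, List.mem_append, List.mem_map, List.mem_map]
    cases h0 : x 0
    · exact Or.inl ⟨Fin.tail x, hmem, by rw [← h0, ← hx]⟩
    · exact Or.inr ⟨Fin.tail x, by simpa using hmem, by rw [← h0, ← hx]⟩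

lemma pairwise_grayList : ∀ n : ℕ, (grayList n).Pairwise grayLT
  | 0 => by simp [grayList]
  | n + 1 => by
    have ih := pairwise_grayList n
    rw [grayList, List.pairwise_append]
    refine ⟨?_, ?_, ?_⟩
    · rw [List.pairwise_map]
      exact ih.imp (fun h => (grayLT_cons_ff _ _).mpr h)
    · rw [List.pairwise_map, List.pairwise_reverse]
      exact ih.imp (fun h => (grayLT_cons_tt _ _).mpr h)
    · intro a ha b hb
      rw [List.mem_map] at ha hb
      obtain ⟨xa, _, rfl⟩ := ha
      obtain ⟨xb, _, rfl⟩ := hb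
      exact grayLT_cons_ft _ _

def Wl (n k : ℕ) : List (Fin n → Bool) := (grayList n).filter (fun x => decide (wt x = k))

lemma wt_le {n : ℕ} (x : Fin n → Bool) : wt x ≤ n := by
  simpa [wt] using Finset.card_filter_le (Finset.univ : Finset (Fin n)) _

lemma Wl_eq_nil {n k : ℕ} (h : n < k) : Wl n k = [] := by
  rw [Wl, List.filter_eq_nil_iff]
  intro a _
  simp only [decide_eq_true_eq]
  have := wt_le a
  omega

lemma Wl_succ (n k : ℕ) : Wl (n+1) (k+1) =
    ((Wl n (k+1)).map (fun x => (Fin.cons false x : Fin (n+1) → Bool)))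
    ++ (((Wl n k).map (fun x => (Fin.cons true x : Fin (n+1) → Bool))).reverse) := by
  show List.filter _ _ = _
  rw [grayList, List.filter_append, List.filter_map, List.filter_map, List.filter_reverse,
    ← List.map_reverse]
  congr 1
  · refine congrArg _ (List.filter_congr ?_)
    intro x _
    simp only [Function.comp_apply, wt_cons]
    simp
  · refine congrArg _ (congrArg _ (List.filter_congr ?_))
    intro x _
    have hw : wt (Fin.cons true x : Fin (n+1) → Bool) = 1 + wt x := by
      rw [wt_cons, if_pos rfl]
    simp only [Function.comp_apply, hw, decide_eq_decide]
    omega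

lemma Wl_zero (n : ℕ) : Wl n 0 = [fun _ => false] := by
  induction n with
  | zero =>
    show List.filter _ _ = _
    rw [grayList]
    rw [List.filter_eq_self.mpr]
    · congr 1; funext i; exact i.elim0
    · intro a ha
      simp only [List.mem_singleton] at ha
      subst ha
      simp only [decide_eq_true_eq, wt]
      simp
  | succ n ih =>
    have : Wl (n+1) 0 = ((Wl n 0).map (fun x => (Fin.cons false x : Fin (n+1) → Bool))) := by
      show List.filter _ _ = _
      rw [grayList, List.filter_append, List.filter_map, List.filter_map, List.filter_reverse]
      have h2 : List.filter ((fun x => decide (wt x = 0)) ∘ (fun x => (Fin.cons true x : Fin (n+1) → Bool))) (grayList n) = [] := by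
        rw [List.filter_eq_nil_iff]
        intro a _
        simp [wt_cons]
      rw [h2]
      simp only [List.reverse_nil, List.map_nil, List.append_nil]
      refine congrArg _ (List.filter_congr ?_)
      intro x _
      simp [wt_cons]
    rw [this, ih]
    simp only [List.map_cons, List.map_nil]
    congr 1
    funext i
    rcases Fin.eq_zero_or_eq_succ i with rfl | ⟨i', rfl⟩ <;> simp

def headVec (n k : ℕ) : Fin n → Bool := fun i => decide (n - k ≤ i.val)
def lastVec (n k : ℕ) : Fin n → Bool := fun i => decide (1 ≤ k ∧ (i.val = 0 ∨ n - k + 1 ≤ i.val))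

lemma Wl_head_last : ∀ n k, k ≤ n →
    (Wl n k).head? = some (headVec n k) ∧ (Wl n k).getLast? = some (lastVec n k)
  | n, 0, _ => by
    rw [Wl_zero]
    constructor
    · simp only [List.head?_cons]
      congr 1
      funext i
      have := i.isLt
      simp only [headVec]
      rw [eq_comm, decide_eq_false_iff_not]
      omega
    · simp only [List.getLast?_singleton]
      congr 1
  | 0, k+1, h => by omega
  | n+1, k+1, h => by
    have hkn : k ≤ n := by omega
    obtain ⟨ihh, ihl⟩ := Wl_head_last n k hkn
    rw [Wl_succ]
    constructor
    · by_cases h' : k + 1 ≤ n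
      · obtain ⟨ihh', _⟩ := Wl_head_last n (k+1) h'
        have hA : (Wl n (k+1)).map (fun x => (Fin.cons false x : Fin (n+1) → Bool)) ≠ [] := by
          intro hc
          rw [List.map_eq_nil_iff] at hc
          rw [hc] at ihh'
          simp at ihh'
        rw [List.head?_append_of_ne_nil _ hA, List.head?_map, ihh']
        simp only [Option.map_some]
        congr 1
        funext i
        rcases Fin.eq_zero_or_eq_succ i with rfl | ⟨i', rfl⟩
        · simp only [Fin.cons_zero, headVec]
          rw [eq_comm, decide_eq_false_iff_not]; simp
          omega
        · simp only [Fin.cons_succ, headVec, Fin.val_succ]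
          rw [decide_eq_decide]
          omega
      · have hn : k = n := by omega
        subst hn
        rw [Wl_eq_nil (by omega)]
        simp only [List.map_nil, List.nil_append]
        rw [List.head?_reverse, List.getLast?_map, ihl]
        simp only [Option.map_some]
        congr 1
        funext i
        rcases Fin.eq_zero_or_eq_succ i with rfl | ⟨i', rfl⟩
        · simp [headVec]
        · have hpos := i'.pos
          have hlt := i'.isLt
          simp only [Fin.cons_succ, lastVec, headVec, Fin.val_succ]
          rw [decide_eq_decide]
          omega
    · rw [List.getLast?_append, List.getLast?_reverse, List.head?_map, ihh]
      simp only [Option.map_some, Option.some_or]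
      congr 1
      funext i
      rcases Fin.eq_zero_or_eq_succ i with rfl | ⟨i', rfl⟩
      · simp only [Fin.cons_zero, lastVec, Fin.val_zero]
        rw [eq_comm, decide_eq_true_iff]
        exact ⟨by omega, Or.inl trivial⟩
      · have hlt := i'.isLt
        simp only [Fin.cons_succ, headVec, lastVec, Fin.val_succ]
        rw [decide_eq_decide]
        omega

lemma lastVec_dist (n k : ℕ) (h : k + 1 ≤ n) :
    hammingDist (lastVec n (k+1)) (lastVec n k) = 1 := by
  have key : ∀ i : Fin n, (¬ lastVec n (k+1) i = lastVec n k i) ↔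
      (i : ℕ) = (if k = 0 then 0 else n - k) := by
    intro i
    have hlt := i.isLt
    simp only [lastVec]
    rw [decide_eq_decide]
    rcases Nat.eq_zero_or_pos k with rfl | hk
    · rw [if_pos rfl]; omega
    · rw [if_neg (by omega)]; omega
  rw [hamming_eq]
  have hfe : (Finset.univ.filter fun i => ¬ lastVec n (k+1) i = lastVec n k i)
      = {(⟨if k = 0 then 0 else n - k, by split <;> omega⟩ : Fin n)} := by
    ext i
    simp only [Finset.mem_filter, Finset.mem_univ, true_and, Finset.mem_singleton, key i,
      Fin.ext_iff]
  rw [hfe, Finset.card_singleton]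

lemma chain_Wl : ∀ n k, (Wl n k).IsChain (fun a b => hammingDist a b = 2)
  | n, 0 => by rw [Wl_zero]; simp
  | 0, k+1 => by rw [Wl_eq_nil (by omega)]; simp
  | n+1, k+1 => by
    rw [Wl_succ, List.isChain_append]
    refine ⟨?_, ?_, ?_⟩
    · rw [List.isChain_map]
      apply (chain_Wl n (k+1)).imp
      intro a b hab
      rw [hamming_cons, hab, if_pos rfl]
    · rw [List.isChain_reverse, List.isChain_map]
      apply (chain_Wl n k).imp
      intro a b hab
      show hammingDist _ _ = 2
      rw [hamming_cons, if_pos rfl, hammingDist_comm, hab]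
    · intro x hx y hy
      by_cases hnil : Wl n (k+1) = []
      · rw [hnil] at hx; simp at hx
      · have hk1n : k + 1 ≤ n := by
          by_contra h'
          exact hnil (Wl_eq_nil (by omega))
        obtain ⟨_, hl⟩ := Wl_head_last n (k+1) hk1n
        obtain ⟨_, hl'⟩ := Wl_head_last n k (by omega)
        rw [List.getLast?_map, hl] at hx
        rw [List.head?_reverse, List.getLast?_map, hl'] at hy
        simp only [Option.mem_def, Option.map_some, Option.some.injEq] at hx hy
        rw [← hx, ← hy, hamming_cons, if_neg (by simp), lastVec_dist n k hk1n]

lemma length_Wl : ∀ n k, (Wl n k).length = n.choose k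
  | n, 0 => by rw [Wl_zero]; simp
  | 0, k+1 => by rw [Wl_eq_nil (by omega)]; simp
  | n+1, k+1 => by
    rw [Wl_succ, List.length_append, List.length_map, List.length_reverse, List.length_map,
      length_Wl n (k+1), length_Wl n k, Nat.choose_succ_succ']
    omega

lemma pairwise_Wl (n k : ℕ) : (Wl n k).Pairwise grayLT :=
  (pairwise_grayList n).filter _

lemma nodup_Wl (n k : ℕ) : (Wl n k).Nodup := by
  apply List.Pairwise.imp ?_ (pairwise_Wl n k)
  intro a b hab
  obtain ⟨j, _, h2, _⟩ := hab
  intro heq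
  exact h2 (by rw [heq])

lemma mem_Wl {n k : ℕ} (x : Fin n → Bool) (h : wt x = k) : x ∈ Wl n k := by
  rw [Wl, List.mem_filter]
  exact ⟨mem_grayList n x, by simp [h]⟩


/-- For `1 ≤ k ≤ N` there is a sequence `v_1, …, v_M` with `M = C(N,k)` listing every
`k`-of-`N` code exactly once, strictly increasing in Gray-code order, in which
consecutive codes are at Hamming distance exactly `2`. -/
theorem exists_gray_enumeration_kofN (N k : ℕ) (hk : 1 ≤ k) (hkN : k ≤ N) :
    ∃ v : Fin (N.choose k) → (Fin N → Bool),
      (∀ t, isKofN N k (v t)) ∧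
      Function.Injective v ∧
      (∀ x : Fin N → Bool, isKofN N k x → ∃ t, v t = x) ∧
      (∀ (t : ℕ) (h : t + 1 < N.choose k),
        grayLT (v ⟨t, by omega⟩) (v ⟨t + 1, h⟩) ∧
        hammingDist (v ⟨t, by omega⟩) (v ⟨t + 1, h⟩) = 2) := by
  have hlen : (Wl N k).length = N.choose k := length_Wl N k
  refine ⟨fun t => (Wl N k).get (Fin.cast hlen.symm t), ?_, ?_, ?_, ?_⟩
  · intro t
    have hm : (Wl N k).get (Fin.cast hlen.symm t) ∈ Wl N k := by
      simp only [List.get_eq_getElem]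
      exact List.getElem_mem _
    unfold Wl at hm
    rw [List.mem_filter] at hm
    have hw : wt ((Wl N k).get (Fin.cast hlen.symm t)) = k := of_decide_eq_true hm.2
    exact hw
  · intro s t hst
    have h2 := (List.nodup_iff_injective_get.mp (nodup_Wl N k)) hst
    have h3 := congrArg Fin.val h2
    exact Fin.ext h3
  · intro x hx
    have hm : x ∈ Wl N k := mem_Wl x hx
    obtain ⟨i, hi⟩ := List.mem_iff_get.mp hm
    refine ⟨Fin.cast hlen i, ?_⟩
    show (Wl N k).get (Fin.cast hlen.symm (Fin.cast hlen i)) = x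
    have he : Fin.cast hlen.symm (Fin.cast hlen i) = i := by
      apply Fin.ext
      simp
    rw [he, hi]
  · intro t h
    have ht1 : t < (Wl N k).length := by omega
    have ht2 : t + 1 < (Wl N k).length := by omega
    have e1 : Fin.cast hlen.symm (⟨t, by omega⟩ : Fin (N.choose k)) = (⟨t, ht1⟩ : Fin (Wl N k).length) := by
      apply Fin.ext; simp
    have e2 : Fin.cast hlen.symm (⟨t + 1, h⟩ : Fin (N.choose k)) = (⟨t + 1, ht2⟩ : Fin (Wl N k).length) := by
      apply Fin.ext; simp
    constructor
    · simp only [e1, e2]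
      exact List.pairwise_iff_get.mp (pairwise_Wl N k) _ _ (by simp [Fin.lt_def])
    · simp only [e1, e2]
      have := List.isChain_iff_getElem.mp (chain_Wl N k) t (by omega)
      exact this
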